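/- For every real k > 0, the function x ↦ B(x, k - x) (Euler beta function) is convex on the open interval (0, k). -/

import Mathlib

open MeasureTheory

/-- The Euler beta function `B(x,y) = ∫₀¹ t^(x-1) (1-t)^(y-1) dt`. -/
noncomputable def betaFn (x y : ℝ) : ℝ :=
  ∫ t in (0:ℝ)..1, t ^ (x - 1) * (1 - t) ^ (y - 1)

lemma ae_ne' {μ : Measure ℝ} [NullSingletonClass μ] (c : ℝ) : ∀ᵐ t ∂μ, t ≠ c := by
  rw [MeasureTheory.ae_iff]
  simp

lemma betaIntegrand_integrable {x y : ℝ} (hx : 0 < x) (hy : 0 < y) :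
    IntervalIntegrable (fun t : ℝ => t ^ (x - 1) * (1 - t) ^ (y - 1)) volume 0 1 := by
  have h := (Complex.betaIntegral_convergent (u := (x : ℂ)) (v := (y : ℂ))
    (by simpa using hx) (by simpa using hy)).norm
  apply h.congr_ae
  rw [Set.uIoc_of_le (by norm_num : (0:ℝ) ≤ 1)]
  filter_upwards [ae_restrict_mem measurableSet_Ioc, ae_ne' (μ := volume.restrict (Set.Ioc (0:ℝ) 1)) (1:ℝ)] with t ht ht1
  have ht0 : 0 < t := ht.1
  have ht1' : 0 < 1 - t := by
    rcases lt_or_eq_of_le ht.2 with h | h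
    · linarith
    · exact absurd h ht1
  simp only [norm_mul]
  rw [show ((1:ℂ) - (t:ℂ)) = ((1 - t : ℝ) : ℂ) by push_cast; ring]
  rw [Complex.norm_cpow_eq_rpow_re_of_pos (by exact_mod_cast ht0),
    Complex.norm_cpow_eq_rpow_re_of_pos (by exact_mod_cast ht1')]
  simp

theorem beta_convex_on_diagonal (k : ℝ) (hk : 0 < k) :
    ConvexOn ℝ (Set.Ioo (0:ℝ) k) (fun x => betaFn x (k - x)) := by
  refine ⟨convex_Ioo 0 k, ?_⟩
  intro x hx y hy a b ha hb hab
  simp only [smul_eq_mul]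
  set z := a * x + b * y with hz
  have hz0 : 0 < z := by
    rcases eq_or_lt_of_le ha with h | h
    · have hb1 : b = 1 := by linarith
      simpa [hz, ← h, hb1] using hy.1
    · have h1 : 0 < a * x := mul_pos h hx.1
      nlinarith [mul_nonneg hb hy.1.le]
  have hzk : z < k := by
    rcases eq_or_lt_of_le ha with h | h
    · have hb1 : b = 1 := by linarith
      simpa [hz, ← h, hb1] using hy.2
    · nlinarith [mul_le_mul_of_nonneg_left hy.2.le hb, mul_lt_mul_of_pos_left hx.2 h]
  have hIx := betaIntegrand_integrable hx.1 (by linarith [hx.2] : (0:ℝ) < k - x)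
  have hIy := betaIntegrand_integrable hy.1 (by linarith [hy.2] : (0:ℝ) < k - y)
  have hIz := betaIntegrand_integrable hz0 (by linarith : (0:ℝ) < k - z)
  have hrhs : a * betaFn x (k - x) + b * betaFn y (k - y) =
      ∫ t in (0:ℝ)..1, (a * (t ^ (x - 1) * (1 - t) ^ (k - x - 1))
        + b * (t ^ (y - 1) * (1 - t) ^ (k - y - 1))) := by
    rw [intervalIntegral.integral_add (hIx.const_mul a) (hIy.const_mul b),
      intervalIntegral.integral_const_mul, intervalIntegral.integral_const_mul]
    rfl
  rw [hrhs]
  unfold betaFn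
  apply intervalIntegral.integral_mono_ae_restrict (by norm_num) hIz
    ((hIx.const_mul a).add (hIy.const_mul b))
  filter_upwards [ae_restrict_mem measurableSet_Icc, ae_ne' (μ := volume.restrict (Set.Icc (0:ℝ) 1)) (0:ℝ), ae_ne' (μ := volume.restrict (Set.Icc (0:ℝ) 1)) (1:ℝ)] with t ht h0 h1
  have ht0 : 0 < t := lt_of_le_of_ne ht.1 (Ne.symm h0)
  have ht1 : 0 < 1 - t := by
    have := lt_of_le_of_ne ht.2 h1
    linarith
  set u := t ^ (x - 1) * (1 - t) ^ (k - x - 1) with hu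
  set v := t ^ (y - 1) * (1 - t) ^ (k - y - 1) with hv
  have hu0 : 0 ≤ u := by positivity
  have hv0 : 0 ≤ v := by positivity
  have key : t ^ (z - 1) * (1 - t) ^ (k - z - 1) = u ^ a * v ^ b := by
    have e1 : z - 1 = (x - 1) * a + (y - 1) * b := by
      rw [hz]; linear_combination hab
    have e2 : k - z - 1 = (k - x - 1) * a + (k - y - 1) * b := by
      rw [hz]; linear_combination (1 - k) * hab
    rw [e1, e2, Real.rpow_add ht0, Real.rpow_add ht1, hu, hv,
      Real.mul_rpow (le_of_lt (Real.rpow_pos_of_pos ht0 _)) (le_of_lt (Real.rpow_pos_of_pos ht1 _)),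
      Real.mul_rpow (le_of_lt (Real.rpow_pos_of_pos ht0 _)) (le_of_lt (Real.rpow_pos_of_pos ht1 _))]
    rw [← Real.rpow_mul ht0.le, ← Real.rpow_mul ht1.le, ← Real.rpow_mul ht0.le,
      ← Real.rpow_mul ht1.le]
    ring
  rw [key]
  exact Real.geom_mean_le_arith_mean2_weighted ha hb hu0 hv0 hab
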